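/- arXiv:math-ph/0207026 — 3 statements merged into one kernel-verified Lean document; each statement's English description precedes it below -/
import Mathlib

section
/- Let Ω ⊆ ℂⁿ be a nonempty open set, w : Ω → ℝ continuous with w > 0, and f : Ω → ℝ measurable, with positive part f⁺ = max(f,0) and negative part f⁻ = max(−f,0). For a measurable g ≥ 0 let t_g(ψ) := ∫_Ω g |ψ|² w dλ. Suppose there exist constants 0 ≤ c₁ < 1 and c₂ ≥ 0 such that t_{f⁻}(ψ) ≤ c₁ t_{f⁺}(ψ) + c₂ ‖ψ‖² for all ψ ∈ Q(t_{f⁺}) := { ψ ∈ A²(Ω,w) : t_{f⁺}(ψ) < ∞ }. Then the form t_f(ψ) := t_{f⁺}(ψ) − t_{f⁻}(ψ) is well defined on Q(t_{f⁺}), is bounded below there by t_f(ψ) ≥ −c₂ ‖ψ‖², and is closed: Q(t_{f⁺}) is complete with respect to the norm ψ ↦ ( t_f(ψ) + (c₂+1) ‖ψ‖² )^{1/2}. -/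
open MeasureTheory ENNReal Filter
open Metric

noncomputable section

instance (n : ℕ) : MeasurableSpace (EuclideanSpace ℂ (Fin n)) :=
  MeasurableSpace.comap WithLp.ofLp MeasurableSpace.pi
instance (n : ℕ) : BorelSpace (EuclideanSpace ℂ (Fin n)) := PiLp.borelSpace 2

/-- Lebesgue measure on `ℂⁿ ≅ ℝ^{2n}`, obtained from the real inner-product structure. -/
instance (n : ℕ) : MeasureSpace (EuclideanSpace ℂ (Fin n)) :=
  letI : InnerProductSpace ℝ (EuclideanSpace ℂ (Fin n)) := InnerProductSpace.rclikeToReal ℂ _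
  measureSpaceOfInnerProductSpace

/-- The quadratic form `t_g(ψ) = ∫_Ω g |ψ|² w dλ` (as an extended real). -/
def tForm (n : ℕ) (Ω : Set (EuclideanSpace ℂ (Fin n)))
    (w g : EuclideanSpace ℂ (Fin n) → ℝ) (ψ : EuclideanSpace ℂ (Fin n) → ℂ) : ℝ≥0∞ :=
  ∫⁻ x in Ω, ENNReal.ofReal (g x * ‖ψ x‖ ^ 2 * w x)

/-- The squared `A²(Ω,w)`-norm `‖ψ‖² = ∫_Ω |ψ|² w dλ` (as an extended real). -/
def l2NormSq (n : ℕ) (Ω : Set (EuclideanSpace ℂ (Fin n)))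
    (w : EuclideanSpace ℂ (Fin n) → ℝ) (ψ : EuclideanSpace ℂ (Fin n) → ℂ) : ℝ≥0∞ :=
  ∫⁻ x in Ω, ENNReal.ofReal (‖ψ x‖ ^ 2 * w x)

/-- Membership in the form domain `Q(t_{f⁺})`: holomorphic, square-integrable, and
`t_{f⁺}(ψ) < ∞`, where `f⁺ = max (f, 0)`. -/
def MemQplus (n : ℕ) (Ω : Set (EuclideanSpace ℂ (Fin n)))
    (w f : EuclideanSpace ℂ (Fin n) → ℝ) (ψ : EuclideanSpace ℂ (Fin n) → ℂ) : Prop :=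
  DifferentiableOn ℂ ψ Ω ∧ l2NormSq n Ω w ψ < ⊤ ∧
    tForm n Ω w (fun x => max (f x) 0) ψ < ⊤

/-- The norm `ψ ↦ (t_f(ψ) + (c₂+1)‖ψ‖²)^{1/2}` associated with the semibounded form
`t_f = t_{f⁺} − t_{f⁻}`. -/
def tfNorm (n : ℕ) (Ω : Set (EuclideanSpace ℂ (Fin n)))
    (w f : EuclideanSpace ℂ (Fin n) → ℝ) (c₂ : ℝ) (ψ : EuclideanSpace ℂ (Fin n) → ℂ) : ℝ :=
  Real.sqrt ((tForm n Ω w (fun x => max (f x) 0) ψ).toReal -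
    (tForm n Ω w (fun x => max (-f x) 0) ψ).toReal + (c₂ + 1) * (l2NormSq n Ω w ψ).toReal)

instance haarE (n : ℕ) : (volume : Measure (EuclideanSpace ℂ (Fin n))).IsAddHaarMeasure := by
  letI : InnerProductSpace ℝ (EuclideanSpace ℂ (Fin n)) := InnerProductSpace.rclikeToReal ℂ _
  infer_instance

private lemma circle_mean_norm_le (g : ℂ → ℂ) (hg : DiffContOnCl ℂ g (ball 0 1)) :
    2 * Real.pi * ‖g 0‖ ≤ ∫ θ in (0:ℝ)..(2 * Real.pi), ‖g (circleMap 0 1 θ)‖ := by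
  have h := hg.circleIntegral_sub_inv_smul (mem_ball_self one_pos)
  rw [circleIntegral] at h
  have heq : Set.EqOn (fun θ : ℝ => deriv (circleMap 0 1) θ • (circleMap 0 1 θ - 0)⁻¹ • g (circleMap 0 1 θ))
      (fun θ : ℝ => Complex.I • g (circleMap 0 1 θ)) (Set.uIcc 0 (2 * Real.pi)) := by
    intro θ _
    have hne : circleMap 0 1 θ ≠ 0 := circleMap_ne_center one_ne_zero
    simp only [deriv_circleMap, sub_zero, smul_smul]
    congr 1
    field_simp
  rw [intervalIntegral.integral_congr heq, intervalIntegral.integral_smul] at h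
  have h2 : (∫ θ in (0:ℝ)..(2 * Real.pi), g (circleMap 0 1 θ)) = ((2 * Real.pi : ℝ) : ℂ) • g 0 := by
    apply smul_right_injective ℂ Complex.I_ne_zero
    show Complex.I • (∫ θ in (0:ℝ)..(2 * Real.pi), g (circleMap 0 1 θ))
        = Complex.I • (((2 * Real.pi : ℝ) : ℂ) • g 0)
    rw [h, smul_smul]
    congr 1
    push_cast
    ring
  have h3 : ‖∫ θ in (0:ℝ)..(2 * Real.pi), g (circleMap 0 1 θ)‖ = 2 * Real.pi * ‖g 0‖ := by
    rw [h2, norm_smul, Complex.norm_real, Real.norm_eq_abs,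
      abs_of_pos Real.two_pi_pos]
  rw [← h3]
  exact intervalIntegral.norm_integral_le_integral_norm (by positivity)


variable {n : ℕ}
local notation "𝔼" => EuclideanSpace ℂ (Fin n)

private lemma slice_mean {Ω : Set 𝔼} (hΩ : IsOpen Ω) (h : 𝔼 → ℂ)
    (hh : DifferentiableOn ℂ h Ω) {x y : 𝔼}
    (hy : ∀ ζ : ℂ, ‖ζ‖ ≤ 1 → x + ζ • y ∈ Ω) :
    2 * Real.pi * ‖h x‖ ≤ ∫ θ in (0:ℝ)..(2 * Real.pi), ‖h (x + circleMap 0 1 θ • y)‖ := by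
  set g : ℂ → ℂ := fun ζ => h (x + ζ • y) with hgdef
  have hU : IsOpen {ζ : ℂ | x + ζ • y ∈ Ω} :=
    (hΩ.preimage (by continuity : Continuous fun ζ : ℂ => x + ζ • y))
  have hgd : DifferentiableOn ℂ g {ζ : ℂ | x + ζ • y ∈ Ω} := by
    apply hh.comp
    · exact (((differentiable_id).smul_const y).const_add x).differentiableOn
    · exact fun ζ hζ => hζ
  have hsub : closedBall (0:ℂ) 1 ⊆ {ζ : ℂ | x + ζ • y ∈ Ω} := by
    intro ζ hζ
    exact hy ζ (by simpa [Complex.dist_eq] using hζ)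
  have hg : DiffContOnCl ℂ g (ball 0 1) := by
    apply DifferentiableOn.diffContOnCl
    rw [closure_ball (0:ℂ) one_ne_zero]
    exact hgd.mono hsub
  have := circle_mean_norm_le g hg
  simpa [hgdef] using this


private lemma rot_measurePreserving (c : ℂ) (hc : ‖c‖ = 1) :
    MeasurePreserving (fun y : 𝔼 => c • y) volume volume := by
  letI : InnerProductSpace ℝ 𝔼 := InnerProductSpace.rclikeToReal ℂ _
  have hc0 : c ≠ 0 := by intro h; rw [h] at hc; simp at hc
  let e : 𝔼 ≃ₗᵢ[ℝ] 𝔼 :=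
    { toLinearEquiv := (LinearEquiv.smulOfNeZero ℂ 𝔼 c hc0).restrictScalars ℝ
      norm_map' := fun y => by simp [norm_smul, hc] }
  exact e.measurePreserving

private lemma rot_preimage_ball (c : ℂ) (hc : ‖c‖ = 1) (r : ℝ) :
    (fun y : 𝔼 => c • y) ⁻¹' (ball (0:𝔼) r) = ball (0:𝔼) r := by
  ext y
  simp [mem_ball_zero_iff, norm_smul, hc]

private lemma rot_measurableEmbedding (c : ℂ) (hc : ‖c‖ = 1) :
    MeasurableEmbedding (fun y : 𝔼 => c • y) := by
  letI : InnerProductSpace ℝ 𝔼 := InnerProductSpace.rclikeToReal ℂ _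
  have hc0 : c ≠ 0 := by intro h; rw [h] at hc; simp at hc
  let e : 𝔼 ≃ₗᵢ[ℝ] 𝔼 :=
    { toLinearEquiv := (LinearEquiv.smulOfNeZero ℂ 𝔼 c hc0).restrictScalars ℝ
      norm_map' := fun y => by simp [norm_smul, hc] }
  exact e.toMeasurableEquiv.measurableEmbedding

private lemma transl_measurePreserving (x : 𝔼) :
    MeasurePreserving (fun y : 𝔼 => x + y) volume volume :=
  measurePreserving_add_left volume x

private lemma transl_preimage_ball (x : 𝔼) (r : ℝ) :
    (fun y : 𝔼 => x + y) ⁻¹' (ball x r) = ball (0:𝔼) r := by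
  ext y
  simp [mem_ball, dist_eq_norm, add_sub_cancel_left]

private lemma ball_submean {Ω : Set 𝔼} (hΩ : IsOpen Ω) (h : 𝔼 → ℂ)
    (hh : DifferentiableOn ℂ h Ω) {x : 𝔼} {r R : ℝ} (hr : 0 < r) (hrR : r < R)
    (hsub : closedBall x R ⊆ Ω) :
    ENNReal.ofReal ‖h x‖ * volume (ball (0:𝔼) r) ≤
      ∫⁻ z in ball x r, ENNReal.ofReal ‖h z‖ := by
  have hcont : ContinuousOn h Ω := hh.continuousOn
  set c : ℝ≥0∞ := ENNReal.ofReal (2 * Real.pi) with hc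
  have hc0 : c ≠ 0 := by
    simp only [hc, ne_eq, ENNReal.ofReal_eq_zero, not_le]
    positivity
  have hctop : c ≠ ⊤ := ENNReal.ofReal_ne_top
  -- the inner map
  set m : ℝ × 𝔼 → 𝔼 := fun p => x + circleMap 0 1 p.1 • p.2 with hm
  have hmc : Continuous m := by
    apply continuous_const.add
    exact ((continuous_circleMap 0 1).comp continuous_fst).smul continuous_snd
  have hmem : ∀ (θ : ℝ), ∀ y ∈ ball (0:𝔼) r, m (θ, y) ∈ Ω := by
    intro θ y hy
    apply hsub
    have : ‖circleMap 0 1 θ • y‖ ≤ ‖y‖ := by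
      rw [norm_smul]
      simp only [norm_circleMap_zero, abs_one, one_mul, le_refl]
    rw [mem_closedBall, dist_eq_norm]
    simp only [hm, add_sub_cancel_left]
    calc ‖circleMap 0 1 θ • y‖ ≤ ‖y‖ := this
    _ ≤ R := le_of_lt (lt_trans (mem_ball_zero_iff.1 hy) hrR)
  -- slice inequality, ENNReal form
  have key : ∀ y ∈ ball (0:𝔼) r,
      c * ENNReal.ofReal ‖h x‖ ≤
        ∫⁻ θ in Set.Ioc 0 (2 * Real.pi), ENNReal.ofReal ‖h (x + circleMap 0 1 θ • y)‖ := by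
    intro y hy
    have hy' : ∀ ζ : ℂ, ‖ζ‖ ≤ 1 → x + ζ • y ∈ Ω := by
      intro ζ hζ
      apply hsub
      rw [mem_closedBall, dist_eq_norm, add_sub_cancel_left, norm_smul]
      calc ‖ζ‖ * ‖y‖ ≤ 1 * ‖y‖ := by gcongr
      _ ≤ R := by rw [one_mul]; exact le_of_lt (lt_trans (mem_ball_zero_iff.1 hy) hrR)
    have hs := slice_mean hΩ h hh hy'
    have hcont2 : Continuous fun θ : ℝ => ‖h (x + circleMap 0 1 θ • y)‖ := by
      apply Continuous.norm
      apply hcont.comp_continuous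
      · exact continuous_const.add ((continuous_circleMap 0 1).smul continuous_const)
      · intro θ; exact hmem θ y hy
    have hint : IntegrableOn (fun θ : ℝ => ‖h (x + circleMap 0 1 θ • y)‖)
        (Set.Ioc 0 (2 * Real.pi)) := by
      apply Continuous.integrableOn_Ioc hcont2
    have heq1 : (∫ θ in (0:ℝ)..(2 * Real.pi), ‖h (x + circleMap 0 1 θ • y)‖)
        = ∫ θ in Set.Ioc 0 (2 * Real.pi), ‖h (x + circleMap 0 1 θ • y)‖ :=
      intervalIntegral.integral_of_le (by positivity)
    have heq2 : ENNReal.ofReal (∫ θ in Set.Ioc 0 (2 * Real.pi), ‖h (x + circleMap 0 1 θ • y)‖)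
        = ∫⁻ θ in Set.Ioc 0 (2 * Real.pi), ENNReal.ofReal ‖h (x + circleMap 0 1 θ • y)‖ :=
      ofReal_integral_eq_lintegral_ofReal hint
        (Filter.Eventually.of_forall fun θ => norm_nonneg _)
    calc c * ENNReal.ofReal ‖h x‖ = ENNReal.ofReal (2 * Real.pi * ‖h x‖) := by
          rw [hc, ← ENNReal.ofReal_mul (by positivity)]
    _ ≤ ENNReal.ofReal (∫ θ in Set.Ioc 0 (2 * Real.pi), ‖h (x + circleMap 0 1 θ • y)‖) := by
          apply ENNReal.ofReal_le_ofReal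
          rw [← heq1]; exact hs
    _ = _ := heq2
  -- uncurry measurability
  have hmeas : AEMeasurable (Function.uncurry fun θ y =>
      ENNReal.ofReal ‖h (m (θ, y))‖)
      ((volume.restrict (Set.Ioc 0 (2 * Real.pi))).prod (volume.restrict (ball (0:𝔼) r))) := by
    rw [Measure.prod_restrict]
    have hS : IsOpen (m ⁻¹' Ω) := hΩ.preimage hmc
    have hps : (Set.Ioc 0 (2 * Real.pi)) ×ˢ (ball (0:𝔼) r) ⊆ m ⁻¹' Ω := by
      rintro ⟨θ, y⟩ ⟨_, hy⟩
      exact hmem θ y hy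
    have hco1 : ContinuousOn (fun p : ℝ × 𝔼 => h (m p)) (m ⁻¹' Ω) :=
      hcont.comp hmc.continuousOn (fun p hp => hp)
    have hco : ContinuousOn (fun p : ℝ × 𝔼 => ENNReal.ofReal ‖h (m p)‖) (m ⁻¹' Ω) :=
      ENNReal.continuous_ofReal.comp_continuousOn hco1.norm
    have h1 : AEMeasurable (fun p : ℝ × 𝔼 => ENNReal.ofReal ‖h (m p)‖)
        (((volume : Measure ℝ).prod (volume : Measure 𝔼)).restrict (m ⁻¹' Ω)) :=
      hco.aemeasurable hS.measurableSet
    exact (h1.mono_measure (Measure.restrict_mono hps le_rfl))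
  -- main computation
  have main : c * (ENNReal.ofReal ‖h x‖ * volume (ball (0:𝔼) r)) ≤
      c * ∫⁻ z in ball x r, ENNReal.ofReal ‖h z‖ := by
    calc c * (ENNReal.ofReal ‖h x‖ * volume (ball (0:𝔼) r))
        = ∫⁻ _ in ball (0:𝔼) r, c * ENNReal.ofReal ‖h x‖ := by
          rw [setLIntegral_const]; ring
    _ ≤ ∫⁻ y in ball (0:𝔼) r, ∫⁻ θ in Set.Ioc 0 (2 * Real.pi),
          ENNReal.ofReal ‖h (x + circleMap 0 1 θ • y)‖ := by
          apply lintegral_mono_ae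
          filter_upwards [ae_restrict_mem measurableSet_ball] with y hy
          exact key y hy
    _ = ∫⁻ θ in Set.Ioc 0 (2 * Real.pi), ∫⁻ y in ball (0:𝔼) r,
          ENNReal.ofReal ‖h (x + circleMap 0 1 θ • y)‖ :=
          (lintegral_lintegral_swap hmeas).symm
    _ = ∫⁻ θ in Set.Ioc 0 (2 * Real.pi), ∫⁻ y in ball (0:𝔼) r,
          ENNReal.ofReal ‖h (x + y)‖ := by
          apply lintegral_congr fun θ => ?_
          have hcm : ‖circleMap 0 1 θ‖ = 1 := by
            simp [norm_circleMap_zero]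
          have := (rot_measurePreserving (circleMap 0 1 θ) hcm).setLIntegral_comp_preimage_emb
            (rot_measurableEmbedding (circleMap 0 1 θ) hcm)
            (fun y => ENNReal.ofReal ‖h (x + y)‖) (ball (0:𝔼) r)
          rw [rot_preimage_ball _ hcm] at this
          exact this
    _ = ∫⁻ θ in Set.Ioc 0 (2 * Real.pi), ∫⁻ z in ball x r, ENNReal.ofReal ‖h z‖ := by
          apply lintegral_congr fun θ => ?_
          have := (transl_measurePreserving x).setLIntegral_comp_preimage_emb
            ((Homeomorph.addLeft x).measurableEmbedding)
            (fun z => ENNReal.ofReal ‖h z‖) (ball x r)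
          rw [transl_preimage_ball x r] at this
          exact this
    _ = c * ∫⁻ z in ball x r, ENNReal.ofReal ‖h z‖ := by
          rw [setLIntegral_const, Real.volume_Ioc, mul_comm]
          congr 1
          rw [hc]
          norm_num
  exact (ENNReal.mul_le_mul_iff_right hc0 hctop).1 main

private lemma bergman_bound {Ω : Set 𝔼} (hΩ : IsOpen Ω) {w : 𝔼 → ℝ}
    (hw : ContinuousOn w Ω) (hwpos : ∀ x ∈ Ω, 0 < w x) {K : Set 𝔼}
    (hK : IsCompact K) (hKΩ : K ⊆ Ω) :
    ∃ C : ℝ≥0∞, C ≠ ⊤ ∧ ∀ ψ : 𝔼 → ℂ, DifferentiableOn ℂ ψ Ω → ∀ x ∈ K,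
      ENNReal.ofReal (‖ψ x‖ ^ 2) ≤ C * l2NormSq n Ω w ψ := by
  rcases Set.eq_empty_or_nonempty K with hKe | hKne
  · exact ⟨1, one_ne_top, by simp [hKe]⟩
  obtain ⟨R, hR0, hRΩ⟩ := hK.exists_cthickening_subset_open hΩ hKΩ
  have hK' : IsCompact (cthickening R K) := hK.cthickening
  have hK'ne : (cthickening R K).Nonempty := hKne.mono (self_subset_cthickening K)
  obtain ⟨x₀, hx₀, hmin⟩ := hK'.exists_isMinOn hK'ne (hw.mono hRΩ)
  set δ := w x₀ with hδdef
  have hδ : 0 < δ := hwpos x₀ (hRΩ hx₀)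
  set r := R / 2 with hrdef
  have hr : 0 < r := half_pos hR0
  set B := volume (ball (0:𝔼) r) with hBdef
  have hB0 : B ≠ 0 := (measure_ball_pos volume 0 hr).ne'
  have hBt : B ≠ ⊤ := measure_ball_lt_top.ne
  have hδ0' : ENNReal.ofReal δ ≠ 0 := (ENNReal.ofReal_pos.2 hδ).ne'
  refine ⟨(ENNReal.ofReal δ)⁻¹ * B⁻¹,
    ENNReal.mul_ne_top (ENNReal.inv_ne_top.2 hδ0') (ENNReal.inv_ne_top.2 hB0), ?_⟩
  intro ψ hψ x hx
  have hcb : closedBall x R ⊆ Ω := (closedBall_subset_cthickening hx R).trans hRΩ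
  have hballK' : ball x r ⊆ cthickening R K := fun z hz =>
    closedBall_subset_cthickening hx R
      ((ball_subset_closedBall.trans (closedBall_subset_closedBall (by linarith))) hz)
  have hballΩ : ball x r ⊆ Ω := fun z hz => hRΩ (hballK' hz)
  have hdiff2 : DifferentiableOn ℂ (fun z => ψ z * ψ z) Ω := hψ.mul hψ
  have hsubm := ball_submean hΩ _ hdiff2 hr (half_lt_self hR0) hcb
  have hnorm : ∀ z, ‖ψ z * ψ z‖ = ‖ψ z‖ ^ 2 := fun z => by rw [norm_mul, sq]
  have hstep : ∀ z ∈ ball x r, ENNReal.ofReal ‖ψ z * ψ z‖ ≤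
      (ENNReal.ofReal δ)⁻¹ * ENNReal.ofReal (‖ψ z‖ ^ 2 * w z) := by
    intro z hz
    have hwz : δ ≤ w z := hmin (hballK' hz)
    have hmul : ENNReal.ofReal δ * ENNReal.ofReal (‖ψ z‖ ^ 2) ≤
        ENNReal.ofReal (‖ψ z‖ ^ 2 * w z) := by
      rw [← ENNReal.ofReal_mul hδ.le]
      apply ENNReal.ofReal_le_ofReal
      nlinarith [sq_nonneg ‖ψ z‖]
    calc ENNReal.ofReal ‖ψ z * ψ z‖
        = (ENNReal.ofReal δ)⁻¹ * (ENNReal.ofReal δ * ENNReal.ofReal (‖ψ z‖ ^ 2)) := by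
          rw [← mul_assoc, ENNReal.inv_mul_cancel hδ0' ENNReal.ofReal_ne_top, one_mul, hnorm]
    _ ≤ _ := mul_le_mul_right hmul _
  have h2 : ∫⁻ z in ball x r, ENNReal.ofReal ‖ψ z * ψ z‖ ≤
      (ENNReal.ofReal δ)⁻¹ * l2NormSq n Ω w ψ := by
    calc ∫⁻ z in ball x r, ENNReal.ofReal ‖ψ z * ψ z‖
        ≤ ∫⁻ z in ball x r, (ENNReal.ofReal δ)⁻¹ * ENNReal.ofReal (‖ψ z‖ ^ 2 * w z) := by
          apply lintegral_mono_ae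
          filter_upwards [ae_restrict_mem measurableSet_ball] with z hz
          exact hstep z hz
    _ = (ENNReal.ofReal δ)⁻¹ * ∫⁻ z in ball x r, ENNReal.ofReal (‖ψ z‖ ^ 2 * w z) :=
          lintegral_const_mul' _ _ (ENNReal.inv_ne_top.2 hδ0')
    _ ≤ (ENNReal.ofReal δ)⁻¹ * l2NormSq n Ω w ψ := by
          apply mul_le_mul_right
          exact lintegral_mono' (Measure.restrict_mono hballΩ le_rfl) le_rfl
  have hfin : ENNReal.ofReal (‖ψ x‖ ^ 2) * B ≤ (ENNReal.ofReal δ)⁻¹ * l2NormSq n Ω w ψ := by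
    calc ENNReal.ofReal (‖ψ x‖ ^ 2) * B = ENNReal.ofReal ‖ψ x * ψ x‖ * B := by rw [hnorm]
    _ ≤ ∫⁻ z in ball x r, ENNReal.ofReal ‖ψ z * ψ z‖ := hsubm
    _ ≤ _ := h2
  rw [← ENNReal.le_div_iff_mul_le (Or.inl hB0) (Or.inl hBt)] at hfin
  calc ENNReal.ofReal (‖ψ x‖ ^ 2) ≤ (ENNReal.ofReal δ)⁻¹ * l2NormSq n Ω w ψ / B := hfin
  _ = (ENNReal.ofReal δ)⁻¹ * B⁻¹ * l2NormSq n Ω w ψ := by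
      rw [ENNReal.div_eq_inv_mul]; ring


private lemma fderiv_bound {Ω : Set 𝔼} (hΩ : IsOpen Ω) (h : 𝔼 → ℂ)
    (hh : DifferentiableOn ℂ h Ω) {x : 𝔼} {r : ℝ} (hr : 0 < r)
    (hsub : closedBall x r ⊆ Ω) {M : ℝ} (hM : ∀ z ∈ closedBall x r, ‖h z‖ ≤ M) :
    ‖fderiv ℂ h x‖ ≤ M / r := by
  have hxΩ : x ∈ Ω := hsub (mem_closedBall_self hr.le)
  have hM0 : 0 ≤ M := le_trans (norm_nonneg _) (hM x (mem_closedBall_self hr.le))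
  apply ContinuousLinearMap.opNorm_le_bound _ (div_nonneg hM0 hr.le)
  intro v
  rcases eq_or_ne v 0 with rfl | hv
  · simp
  set u : 𝔼 := ((‖v‖ : ℂ))⁻¹ • v with hu
  have hvn : ((‖v‖ : ℝ) : ℂ) ≠ 0 := by
    simp only [ne_eq, Complex.ofReal_eq_zero, norm_eq_zero]
    exact hv
  have hun : ‖u‖ = 1 := by
    rw [hu, norm_smul, norm_inv]
    rw [Complex.norm_real, Real.norm_eq_abs, abs_of_nonneg (norm_nonneg v)]
    exact inv_mul_cancel₀ (norm_ne_zero_iff.2 hv)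
  have hvu : v = ((‖v‖ : ℝ) : ℂ) • u := by
    rw [hu, smul_smul, mul_inv_cancel₀ hvn, one_smul]
  have hlin : fderiv ℂ h x v = ((‖v‖ : ℝ) : ℂ) • fderiv ℂ h x u := by
    conv_lhs => rw [hvu]
    exact (fderiv ℂ h x).map_smul _ _
  set g : ℂ → ℂ := fun ζ => h (x + ζ • u) with hg
  set U : Set ℂ := {ζ : ℂ | x + ζ • u ∈ Ω} with hUdef
  have hU : IsOpen U := hΩ.preimage (continuous_const.add (continuous_id.smul continuous_const))
  have hgd : DifferentiableOn ℂ g U := by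
    apply hh.comp
    · exact (((differentiable_id).smul_const u).const_add x).differentiableOn
    · exact fun ζ hζ => hζ
  have hcb : closedBall (0:ℂ) r ⊆ U := by
    intro ζ hζ
    apply hsub
    rw [mem_closedBall, dist_eq_norm, add_sub_cancel_left, norm_smul, hun, mul_one]
    simpa [Complex.dist_eq] using hζ
  have hdx : DifferentiableAt ℂ h x := hh.differentiableAt (hΩ.mem_nhds hxΩ)
  have hder : HasDerivAt g (fderiv ℂ h x u) 0 := by
    have h1 : HasDerivAt (fun ζ : ℂ => x + ζ • u) u 0 := by
      simpa using ((hasDerivAt_id (0:ℂ)).smul_const u).const_add x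
    have h2 : HasFDerivAt h (fderiv ℂ h x) (x + (0:ℂ) • u) := by
      rw [zero_smul, add_zero]
      exact hdx.hasFDerivAt
    exact h2.comp_hasDerivAt 0 h1
  have hcd : Complex.cderiv r g 0 = deriv g 0 := Complex.cderiv_eq_deriv hU hgd hr hcb
  have hbnd : ‖Complex.cderiv r g 0‖ ≤ M / r := by
    apply Complex.norm_cderiv_le hr
    intro ζ hζ
    apply hM
    have hζr : ‖ζ‖ = r := by simpa [Complex.dist_eq] using hζ
    rw [mem_closedBall, dist_eq_norm, add_sub_cancel_left, norm_smul, hun, mul_one, hζr]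
  have hkey : ‖fderiv ℂ h x u‖ ≤ M / r := by
    rw [← hder.deriv, ← hcd]
    exact hbnd
  calc ‖fderiv ℂ h x v‖ = ‖v‖ * ‖fderiv ℂ h x u‖ := by
        rw [hlin, norm_smul, Complex.norm_real, Real.norm_eq_abs, abs_of_nonneg (norm_nonneg v)]
  _ ≤ ‖v‖ * (M / r) := mul_le_mul_of_nonneg_left hkey (norm_nonneg v)
  _ = M / r * ‖v‖ := mul_comm _ _

private lemma aemeas_ofReal_mul {Ω : Set 𝔼} (hΩm : MeasurableSet Ω) {c : 𝔼 → ℝ}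
    (hc : AEMeasurable c (volume.restrict Ω)) {a : 𝔼 → ℂ} (ha : ContinuousOn a Ω) :
    AEMeasurable (fun x => ENNReal.ofReal (c x * ‖a x‖ ^ 2)) (volume.restrict Ω) :=
  ENNReal.measurable_ofReal.comp_aemeasurable
    (hc.mul (((ha.aemeasurable hΩm).norm).pow_const 2))

private lemma lint_add_sq_le {Ω : Set 𝔼} (hΩm : MeasurableSet Ω) {c : 𝔼 → ℝ}
    (hc0 : ∀ x ∈ Ω, 0 ≤ c x) (hc : AEMeasurable c (volume.restrict Ω))
    {a b : 𝔼 → ℂ} (ha : ContinuousOn a Ω) (hb : ContinuousOn b Ω) :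
    ∫⁻ x in Ω, ENNReal.ofReal (c x * ‖a x + b x‖ ^ 2) ≤
      2 * (∫⁻ x in Ω, ENNReal.ofReal (c x * ‖a x‖ ^ 2)) +
      2 * (∫⁻ x in Ω, ENNReal.ofReal (c x * ‖b x‖ ^ 2)) := by
  have hpt : ∀ x ∈ Ω, ENNReal.ofReal (c x * ‖a x + b x‖ ^ 2) ≤
      2 * ENNReal.ofReal (c x * ‖a x‖ ^ 2) + 2 * ENNReal.ofReal (c x * ‖b x‖ ^ 2) := by
    intro x hx
    have hcx := hc0 x hx
    have h1 : ‖a x + b x‖ ^ 2 ≤ 2 * ‖a x‖ ^ 2 + 2 * ‖b x‖ ^ 2 := by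
      have h2 := norm_add_le (a x) (b x)
      nlinarith [norm_nonneg (a x), norm_nonneg (b x), sq_nonneg (‖a x‖ - ‖b x‖),
        norm_nonneg (a x + b x)]
    have hca : (0:ℝ) ≤ 2 * (c x * ‖a x‖ ^ 2) := by
      have := mul_nonneg hcx (sq_nonneg ‖a x‖); linarith
    have hcb : (0:ℝ) ≤ 2 * (c x * ‖b x‖ ^ 2) := by
      have := mul_nonneg hcx (sq_nonneg ‖b x‖); linarith
    calc ENNReal.ofReal (c x * ‖a x + b x‖ ^ 2)
        ≤ ENNReal.ofReal (2 * (c x * ‖a x‖ ^ 2) + 2 * (c x * ‖b x‖ ^ 2)) := by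
          apply ENNReal.ofReal_le_ofReal
          nlinarith [sq_nonneg ‖a x + b x‖]
    _ = ENNReal.ofReal (2 * (c x * ‖a x‖ ^ 2)) + ENNReal.ofReal (2 * (c x * ‖b x‖ ^ 2)) :=
          ENNReal.ofReal_add hca hcb
    _ = 2 * ENNReal.ofReal (c x * ‖a x‖ ^ 2) + 2 * ENNReal.ofReal (c x * ‖b x‖ ^ 2) := by
          rw [ENNReal.ofReal_mul (by norm_num : (0:ℝ) ≤ 2),
            ENNReal.ofReal_mul (by norm_num : (0:ℝ) ≤ 2)]
          norm_num
  calc ∫⁻ x in Ω, ENNReal.ofReal (c x * ‖a x + b x‖ ^ 2)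
      ≤ ∫⁻ x in Ω, (2 * ENNReal.ofReal (c x * ‖a x‖ ^ 2)
          + 2 * ENNReal.ofReal (c x * ‖b x‖ ^ 2)) := by
        apply lintegral_mono_ae
        filter_upwards [ae_restrict_mem hΩm] with x hx using hpt x hx
  _ = 2 * (∫⁻ x in Ω, ENNReal.ofReal (c x * ‖a x‖ ^ 2)) +
      2 * (∫⁻ x in Ω, ENNReal.ofReal (c x * ‖b x‖ ^ 2)) := by
        rw [lintegral_add_left' ((aemeas_ofReal_mul hΩm hc ha).const_mul 2),
          lintegral_const_mul' 2 _ ENNReal.ofNat_ne_top,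
          lintegral_const_mul' 2 _ ENNReal.ofNat_ne_top]

private lemma tForm_eq_c {Ω : Set 𝔼} (w g : 𝔼 → ℝ) (ψ : 𝔼 → ℂ) :
    tForm n Ω w g ψ = ∫⁻ x in Ω, ENNReal.ofReal ((g x * w x) * ‖ψ x‖ ^ 2) :=
  lintegral_congr fun x => by rw [show g x * ‖ψ x‖ ^ 2 * w x = (g x * w x) * ‖ψ x‖ ^ 2 by ring]

private lemma l2_eq_c {Ω : Set 𝔼} (w : 𝔼 → ℝ) (ψ : 𝔼 → ℂ) :
    l2NormSq n Ω w ψ = ∫⁻ x in Ω, ENNReal.ofReal (w x * ‖ψ x‖ ^ 2) :=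
  lintegral_congr fun x => by rw [mul_comm]

private lemma tForm_neg {Ω : Set 𝔼} (w g : 𝔼 → ℝ) (ψ : 𝔼 → ℂ) :
    tForm n Ω w g (fun x => -ψ x) = tForm n Ω w g ψ :=
  lintegral_congr fun x => by rw [norm_neg]

private lemma l2_neg {Ω : Set 𝔼} (w : 𝔼 → ℝ) (ψ : 𝔼 → ℂ) :
    l2NormSq n Ω w (fun x => -ψ x) = l2NormSq n Ω w ψ :=
  lintegral_congr fun x => by rw [norm_neg]

private lemma tForm_add_le {Ω : Set 𝔼} (hΩm : MeasurableSet Ω) {w g : 𝔼 → ℝ}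
    (hg0 : ∀ x ∈ Ω, 0 ≤ g x) (hgm : Measurable g)
    (hw : ContinuousOn w Ω) (hw0 : ∀ x ∈ Ω, 0 ≤ w x)
    {a b : 𝔼 → ℂ} (ha : ContinuousOn a Ω) (hb : ContinuousOn b Ω) :
    tForm n Ω w g (fun x => a x + b x) ≤ 2 * tForm n Ω w g a + 2 * tForm n Ω w g b := by
  rw [tForm_eq_c, tForm_eq_c, tForm_eq_c]
  exact lint_add_sq_le hΩm (fun x hx => mul_nonneg (hg0 x hx) (hw0 x hx))
    (hgm.aemeasurable.mul (hw.aemeasurable hΩm)) ha hb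

private lemma l2_add_le {Ω : Set 𝔼} (hΩm : MeasurableSet Ω) {w : 𝔼 → ℝ}
    (hw : ContinuousOn w Ω) (hw0 : ∀ x ∈ Ω, 0 ≤ w x)
    {a b : 𝔼 → ℂ} (ha : ContinuousOn a Ω) (hb : ContinuousOn b Ω) :
    l2NormSq n Ω w (fun x => a x + b x) ≤ 2 * l2NormSq n Ω w a + 2 * l2NormSq n Ω w b := by
  rw [l2_eq_c, l2_eq_c, l2_eq_c]
  exact lint_add_sq_le hΩm hw0 (hw.aemeasurable hΩm) ha hb

private lemma tForm_sub_le {Ω : Set 𝔼} (hΩm : MeasurableSet Ω) {w g : 𝔼 → ℝ}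
    (hg0 : ∀ x ∈ Ω, 0 ≤ g x) (hgm : Measurable g)
    (hw : ContinuousOn w Ω) (hw0 : ∀ x ∈ Ω, 0 ≤ w x)
    {a b : 𝔼 → ℂ} (ha : ContinuousOn a Ω) (hb : ContinuousOn b Ω) :
    tForm n Ω w g (fun x => a x - b x) ≤ 2 * tForm n Ω w g a + 2 * tForm n Ω w g b := by
  have h := tForm_add_le hΩm hg0 hgm hw hw0 ha hb.neg (b := fun x => -b x)
  rw [tForm_neg] at h
  simpa [sub_eq_add_neg] using h

private lemma l2_sub_le {Ω : Set 𝔼} (hΩm : MeasurableSet Ω) {w : 𝔼 → ℝ}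
    (hw : ContinuousOn w Ω) (hw0 : ∀ x ∈ Ω, 0 ≤ w x)
    {a b : 𝔼 → ℂ} (ha : ContinuousOn a Ω) (hb : ContinuousOn b Ω) :
    l2NormSq n Ω w (fun x => a x - b x) ≤ 2 * l2NormSq n Ω w a + 2 * l2NormSq n Ω w b := by
  have h := l2_add_le hΩm hw hw0 ha hb.neg (b := fun x => -b x)
  rw [l2_neg] at h
  simpa [sub_eq_add_neg] using h

private lemma memQ_sub {Ω : Set 𝔼} (hΩm : MeasurableSet Ω) {w f : 𝔼 → ℝ}
    (hw : ContinuousOn w Ω) (hw0 : ∀ x ∈ Ω, 0 ≤ w x) (hf : Measurable f)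
    {a b : 𝔼 → ℂ} (ha : MemQplus n Ω w f a) (hb : MemQplus n Ω w f b) :
    MemQplus n Ω w f (fun x => a x - b x) := by
  obtain ⟨ha1, ha2, ha3⟩ := ha
  obtain ⟨hb1, hb2, hb3⟩ := hb
  refine ⟨ha1.sub hb1, ?_, ?_⟩
  · exact lt_of_le_of_lt (l2_sub_le hΩm hw hw0 ha1.continuousOn hb1.continuousOn)
      (ENNReal.add_lt_top.2 ⟨ENNReal.mul_lt_top (by norm_num) ha2,
        ENNReal.mul_lt_top (by norm_num) hb2⟩)
  · exact lt_of_le_of_lt (tForm_sub_le hΩm (fun x _ => le_max_right _ _)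
      (hf.max measurable_const) hw hw0 ha1.continuousOn hb1.continuousOn)
      (ENNReal.add_lt_top.2 ⟨ENNReal.mul_lt_top (by norm_num) ha3,
        ENNReal.mul_lt_top (by norm_num) hb3⟩)

private lemma fatou_bound {α : Type*} [MeasurableSpace α] (μ : Measure α)
    (F : ℕ → α → ℝ≥0∞) (G : α → ℝ≥0∞)
    (hmeas : ∀ l, AEMeasurable (F l) μ)
    (hlim : ∀ᵐ x ∂μ, Tendsto (fun l => F l x) atTop (nhds (G x)))
    {c : ℝ≥0∞} (hc : ∀ᶠ l in atTop, ∫⁻ x, F l x ∂μ ≤ c) :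
    ∫⁻ x, G x ∂μ ≤ c := by
  have h1 : ∫⁻ x, G x ∂μ = ∫⁻ x, liminf (fun l => F l x) atTop ∂μ :=
    lintegral_congr_ae (hlim.mono fun x hx => hx.liminf_eq.symm)
  rw [h1]
  refine le_trans (lintegral_liminf_le' hmeas) ?_
  refine le_trans liminf_le_limsup ?_
  exact limsup_le_of_le (by isBoundedDefault) hc


set_option maxHeartbeats 1600000 in
/-- KLMN-type lemma for Berezin-Toeplitz forms: if `t_{f⁻}` is a
form-bounded perturbation of `t_{f⁺}` with relative bound `c₁ < 1`, then
`t_f = t_{f⁺} − t_{f⁻}` is well defined on `Q(t_{f⁺})`, bounded below by `−c₂‖ψ‖²`,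
and closed: `Q(t_{f⁺})` is complete in the norm `(t_f(ψ) + (c₂+1)‖ψ‖²)^{1/2}`. -/
theorem form_tf_semibounded_closed (n : ℕ) (Ω : Set (EuclideanSpace ℂ (Fin n)))
    (hΩ : IsOpen Ω) (hne : Ω.Nonempty)
    (w : EuclideanSpace ℂ (Fin n) → ℝ) (hw : ContinuousOn w Ω)
    (hwpos : ∀ x ∈ Ω, 0 < w x)
    (f : EuclideanSpace ℂ (Fin n) → ℝ) (hf : Measurable f)
    (c₁ c₂ : ℝ) (hc₁0 : 0 ≤ c₁) (hc₁1 : c₁ < 1) (hc₂ : 0 ≤ c₂)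
    (hbound : ∀ ψ, MemQplus n Ω w f ψ →
      tForm n Ω w (fun x => max (-f x) 0) ψ ≤
        ENNReal.ofReal c₁ * tForm n Ω w (fun x => max (f x) 0) ψ +
          ENNReal.ofReal c₂ * l2NormSq n Ω w ψ) :
    -- `t_f` is well defined on `Q(t_{f⁺})` …
    (∀ ψ, MemQplus n Ω w f ψ → tForm n Ω w (fun x => max (-f x) 0) ψ < ⊤) ∧
    -- … bounded below there by `−c₂‖ψ‖²` …
    (∀ ψ, MemQplus n Ω w f ψ →
      -(c₂ * (l2NormSq n Ω w ψ).toReal) ≤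
        (tForm n Ω w (fun x => max (f x) 0) ψ).toReal -
          (tForm n Ω w (fun x => max (-f x) 0) ψ).toReal) ∧
    -- … and closed: `Q(t_{f⁺})` is complete with respect to the norm `tfNorm`.
    (∀ ψ : ℕ → EuclideanSpace ℂ (Fin n) → ℂ, (∀ l, MemQplus n Ω w f (ψ l)) →
      (∀ ε : ℝ, 0 < ε → ∃ N : ℕ, ∀ k ≥ N, ∀ l ≥ N,
        tfNorm n Ω w f c₂ (fun x => ψ k x - ψ l x) < ε) →
      ∃ φ, MemQplus n Ω w f φ ∧
        Tendsto (fun l => tfNorm n Ω w f c₂ (fun x => ψ l x - φ x)) atTop (nhds 0)) := by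
  have hΩm : MeasurableSet Ω := hΩ.measurableSet
  have hw0 : ∀ x ∈ Ω, 0 ≤ w x := fun x hx => (hwpos x hx).le
  -- Part 1
  have part1 : ∀ φ, MemQplus n Ω w f φ → tForm n Ω w (fun x => max (-f x) 0) φ < ⊤ := by
    intro φ hφ
    refine lt_of_le_of_lt (hbound φ hφ) ?_
    exact ENNReal.add_lt_top.2 ⟨ENNReal.mul_lt_top ENNReal.ofReal_lt_top hφ.2.2,
      ENNReal.mul_lt_top ENNReal.ofReal_lt_top hφ.2.1⟩
  -- toReal version of the bound
  have hBle : ∀ φ, MemQplus n Ω w f φ →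
      (tForm n Ω w (fun x => max (-f x) 0) φ).toReal ≤
        c₁ * (tForm n Ω w (fun x => max (f x) 0) φ).toReal +
          c₂ * (l2NormSq n Ω w φ).toReal := by
    intro φ hφ
    have h1 := hbound φ hφ
    have hA : tForm n Ω w (fun x => max (f x) 0) φ ≠ ⊤ := hφ.2.2.ne
    have hL : l2NormSq n Ω w φ ≠ ⊤ := hφ.2.1.ne
    have hR : ENNReal.ofReal c₁ * tForm n Ω w (fun x => max (f x) 0) φ +
        ENNReal.ofReal c₂ * l2NormSq n Ω w φ ≠ ⊤ :=
      (ENNReal.add_lt_top.2 ⟨ENNReal.mul_lt_top ENNReal.ofReal_lt_top hφ.2.2,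
        ENNReal.mul_lt_top ENNReal.ofReal_lt_top hφ.2.1⟩).ne
    calc (tForm n Ω w (fun x => max (-f x) 0) φ).toReal
        ≤ (ENNReal.ofReal c₁ * tForm n Ω w (fun x => max (f x) 0) φ +
            ENNReal.ofReal c₂ * l2NormSq n Ω w φ).toReal := ENNReal.toReal_mono hR h1
    _ = c₁ * (tForm n Ω w (fun x => max (f x) 0) φ).toReal +
          c₂ * (l2NormSq n Ω w φ).toReal := by
        rw [ENNReal.toReal_add (ENNReal.mul_ne_top ENNReal.ofReal_ne_top hA)
          (ENNReal.mul_ne_top ENNReal.ofReal_ne_top hL), ENNReal.toReal_mul,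
          ENNReal.toReal_mul, ENNReal.toReal_ofReal hc₁0, ENNReal.toReal_ofReal hc₂]
  -- Part 2
  have part2 : ∀ φ, MemQplus n Ω w f φ →
      -(c₂ * (l2NormSq n Ω w φ).toReal) ≤
        (tForm n Ω w (fun x => max (f x) 0) φ).toReal -
          (tForm n Ω w (fun x => max (-f x) 0) φ).toReal := by
    intro φ hφ
    have h := hBle φ hφ
    have hA0 : 0 ≤ (tForm n Ω w (fun x => max (f x) 0) φ).toReal := ENNReal.toReal_nonneg
    nlinarith [mul_nonneg (sub_nonneg.2 hc₁1.le) hA0]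
  refine ⟨part1, part2, ?_⟩
  -- Part 3
  -- the squared norm identity and lower bound
  have htf0 : ∀ φ : EuclideanSpace ℂ (Fin n) → ℂ, 0 ≤ tfNorm n Ω w f c₂ φ := fun φ =>
    Real.sqrt_nonneg _
  have hsq : ∀ φ, MemQplus n Ω w f φ →
      tfNorm n Ω w f c₂ φ ^ 2 =
        (tForm n Ω w (fun x => max (f x) 0) φ).toReal -
          (tForm n Ω w (fun x => max (-f x) 0) φ).toReal +
          (c₂ + 1) * (l2NormSq n Ω w φ).toReal := by
    intro φ hφ
    have h := hBle φ hφ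
    have hA0 : 0 ≤ (tForm n Ω w (fun x => max (f x) 0) φ).toReal := ENNReal.toReal_nonneg
    have hL0 : 0 ≤ (l2NormSq n Ω w φ).toReal := ENNReal.toReal_nonneg
    apply Real.sq_sqrt
    nlinarith [mul_nonneg (sub_nonneg.2 hc₁1.le) hA0]
  have hlow : ∀ φ, MemQplus n Ω w f φ →
      (1 - c₁) * (tForm n Ω w (fun x => max (f x) 0) φ).toReal +
        (l2NormSq n Ω w φ).toReal ≤ tfNorm n Ω w f c₂ φ ^ 2 := by
    intro φ hφ
    rw [hsq φ hφ]
    have h := hBle φ hφ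
    have hL0 : 0 ≤ (l2NormSq n Ω w φ).toReal := ENNReal.toReal_nonneg
    nlinarith
  -- ENNReal-level consequences
  have hL2Q : ∀ φ, MemQplus n Ω w f φ →
      l2NormSq n Ω w φ ≤ ENNReal.ofReal (tfNorm n Ω w f c₂ φ ^ 2) := by
    intro φ hφ
    have h := hlow φ hφ
    have hA0 : 0 ≤ (tForm n Ω w (fun x => max (f x) 0) φ).toReal := ENNReal.toReal_nonneg
    calc l2NormSq n Ω w φ = ENNReal.ofReal (l2NormSq n Ω w φ).toReal :=
          (ENNReal.ofReal_toReal hφ.2.1.ne).symm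
    _ ≤ ENNReal.ofReal (tfNorm n Ω w f c₂ φ ^ 2) := by
          apply ENNReal.ofReal_le_ofReal
          nlinarith [mul_nonneg (sub_nonneg.2 hc₁1.le) hA0]
  have hTpQ : ∀ φ, MemQplus n Ω w f φ →
      tForm n Ω w (fun x => max (f x) 0) φ ≤
        ENNReal.ofReal (tfNorm n Ω w f c₂ φ ^ 2 / (1 - c₁)) := by
    intro φ hφ
    have h := hlow φ hφ
    have hL0 : 0 ≤ (l2NormSq n Ω w φ).toReal := ENNReal.toReal_nonneg
    have h1c : 0 < 1 - c₁ := by linarith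
    calc tForm n Ω w (fun x => max (f x) 0) φ
        = ENNReal.ofReal (tForm n Ω w (fun x => max (f x) 0) φ).toReal :=
          (ENNReal.ofReal_toReal hφ.2.2.ne).symm
    _ ≤ ENNReal.ofReal (tfNorm n Ω w f c₂ φ ^ 2 / (1 - c₁)) := by
          apply ENNReal.ofReal_le_ofReal
          rw [le_div_iff₀ h1c]
          nlinarith
  -- sup bound over compacts
  have hsup : ∀ K : Set (EuclideanSpace ℂ (Fin n)), IsCompact K → K ⊆ Ω →
      ∃ C' : ℝ, 0 ≤ C' ∧ ∀ φ, MemQplus n Ω w f φ → ∀ x ∈ K,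
        ‖φ x‖ ≤ C' * tfNorm n Ω w f c₂ φ := by
    intro K hK hKΩ
    obtain ⟨C, hCt, hC⟩ := bergman_bound hΩ hw hwpos hK hKΩ
    refine ⟨Real.sqrt C.toReal, Real.sqrt_nonneg _, ?_⟩
    intro φ hφ x hx
    have h1 : ENNReal.ofReal (‖φ x‖ ^ 2) ≤ C * ENNReal.ofReal (tfNorm n Ω w f c₂ φ ^ 2) :=
      le_trans (hC φ hφ.1 x hx) (mul_le_mul_right (hL2Q φ hφ) C)
    have h2 : ‖φ x‖ ^ 2 ≤ C.toReal * tfNorm n Ω w f c₂ φ ^ 2 := by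
      have h3 := ENNReal.toReal_mono
        (ENNReal.mul_ne_top hCt ENNReal.ofReal_ne_top) h1
      rwa [ENNReal.toReal_ofReal (by positivity), ENNReal.toReal_mul,
        ENNReal.toReal_ofReal (by positivity)] at h3
    calc ‖φ x‖ = Real.sqrt (‖φ x‖ ^ 2) := (Real.sqrt_sq (norm_nonneg _)).symm
    _ ≤ Real.sqrt (C.toReal * tfNorm n Ω w f c₂ φ ^ 2) := Real.sqrt_le_sqrt h2
    _ = Real.sqrt C.toReal * tfNorm n Ω w f c₂ φ := by
        rw [Real.sqrt_mul ENNReal.toReal_nonneg, Real.sqrt_sq (htf0 φ)]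
  intro ψ hQ hCauchy
  have hdQ : ∀ k l, MemQplus n Ω w f (fun x => ψ k x - ψ l x) := fun k l =>
    memQ_sub hΩm hw hw0 hf (hQ k) (hQ l)
  -- uniform Cauchy on compacts
  have hUC : ∀ K : Set (EuclideanSpace ℂ (Fin n)), IsCompact K → K ⊆ Ω →
      UniformCauchySeqOn (fun l x => ψ l x) atTop K := by
    intro K hK hKΩ
    obtain ⟨C', hC'0, hC'⟩ := hsup K hK hKΩ
    rw [Metric.uniformCauchySeqOn_iff]
    intro ε hε
    obtain ⟨N, hN⟩ := hCauchy (ε / (C' + 1)) (by positivity)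
    refine ⟨N, fun k hk l hl x hx => ?_⟩
    have h1 := hC' _ (hdQ k l) x hx
    have h2 := hN k hk l hl
    rw [dist_eq_norm]
    calc ‖ψ k x - ψ l x‖ ≤ C' * tfNorm n Ω w f c₂ (fun x => ψ k x - ψ l x) := h1
    _ < ε := by
        have h3 := htf0 (fun x => ψ k x - ψ l x)
        rcases eq_or_lt_of_le hC'0 with h4 | h4
        · rw [← h4]; simpa using hε
        · calc C' * tfNorm n Ω w f c₂ (fun x => ψ k x - ψ l x)
              < C' * (ε / (C' + 1)) := by exact mul_lt_mul_of_pos_left h2 h4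
          _ < ε := by
              rw [mul_div_assoc', div_lt_iff₀ (by linarith : (0:ℝ) < C' + 1)]
              have hre : ε * (C' + 1) = C' * ε + ε := by ring
              rw [hre]
              linarith
  -- pointwise limit
  set φ₀ : EuclideanSpace ℂ (Fin n) → ℂ := fun x => limUnder atTop (fun l => ψ l x) with hφ₀
  have hptlim : ∀ x ∈ Ω, Tendsto (fun l => ψ l x) atTop (nhds (φ₀ x)) := by
    intro x hx
    have hcs : CauchySeq (fun l => ψ l x) := by
      rw [Metric.cauchySeq_iff]
      intro ε hε
      have h1 := hUC {x} isCompact_singleton (by simpa using hx)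
      rw [Metric.uniformCauchySeqOn_iff] at h1
      obtain ⟨N, hN⟩ := h1 ε hε
      exact ⟨N, fun k hk l hl => hN k hk l hl x rfl⟩
    obtain ⟨a, ha⟩ := cauchySeq_tendsto_of_complete hcs
    have hval : φ₀ x = a := ha.limUnder_eq
    rwa [hval]
  have hlocunif : TendstoLocallyUniformlyOn (fun l x => ψ l x) φ₀ atTop Ω := by
    rw [tendstoLocallyUniformlyOn_iff_forall_isCompact hΩ]
    intro K hKΩ hK
    exact (hUC K hK hKΩ).tendstoUniformlyOn_of_tendsto
      (fun x hx => hptlim x (hKΩ hx))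
  -- derivatives
  set F' : ℕ → EuclideanSpace ℂ (Fin n) → (EuclideanSpace ℂ (Fin n) →L[ℂ] ℂ) :=
    fun l x => fderiv ℂ (ψ l) x with hF'
  have hFd : ∀ l, ∀ x ∈ Ω, HasFDerivAt (ψ l) (F' l x) x := fun l x hx =>
    ((hQ l).1.differentiableAt (hΩ.mem_nhds hx)).hasFDerivAt
  have hUCd : ∀ K : Set (EuclideanSpace ℂ (Fin n)), IsCompact K → K ⊆ Ω →
      UniformCauchySeqOn F' atTop K := by
    intro K hK hKΩ
    obtain ⟨R, hR0, hRΩ⟩ := hK.exists_cthickening_subset_open hΩ hKΩ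
    obtain ⟨C', hC'0, hC'⟩ := hsup _ (hK.cthickening) hRΩ
    rw [Metric.uniformCauchySeqOn_iff]
    intro ε hε
    obtain ⟨N, hN⟩ := hCauchy (ε * R / (C' + 1)) (by positivity)
    refine ⟨N, fun k hk l hl x hx => ?_⟩
    have hcbΩ : closedBall x R ⊆ Ω := (closedBall_subset_cthickening hx R).trans hRΩ
    have hM : ∀ z ∈ closedBall x R, ‖ψ k z - ψ l z‖ ≤
        C' * tfNorm n Ω w f c₂ (fun y => ψ k y - ψ l y) := fun z hz =>
      hC' _ (hdQ k l) z (closedBall_subset_cthickening hx R hz)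
    have hb := fderiv_bound hΩ _ (hdQ k l).1 hR0 hcbΩ hM
    have hx' : x ∈ Ω := hKΩ hx
    have heq : fderiv ℂ (fun y => ψ k y - ψ l y) x = F' k x - F' l x :=
      fderiv_sub ((hQ k).1.differentiableAt (hΩ.mem_nhds hx'))
        ((hQ l).1.differentiableAt (hΩ.mem_nhds hx'))
    rw [dist_eq_norm, ← heq]
    refine lt_of_le_of_lt hb ?_
    have h2 := hN k hk l hl
    have h3 := htf0 (fun y => ψ k y - ψ l y)
    set t := tfNorm n Ω w f c₂ (fun y => ψ k y - ψ l y) with htdef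
    have hC1 : (0:ℝ) < C' + 1 := by linarith
    have h4 : t * (C' + 1) < ε * R := by
      rw [← lt_div_iff₀ hC1]; exact h2
    rw [div_lt_iff₀ hR0]
    nlinarith
  have hptd : ∀ x ∈ Ω, Tendsto (fun l => F' l x) atTop
      (nhds (limUnder atTop (fun l => F' l x))) := by
    intro x hx
    have hcs : CauchySeq (fun l => F' l x) := by
      rw [Metric.cauchySeq_iff]
      intro ε hε
      have h1 := hUCd {x} isCompact_singleton (by simpa using hx)
      rw [Metric.uniformCauchySeqOn_iff] at h1
      obtain ⟨N, hN⟩ := h1 ε hε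
      exact ⟨N, fun k hk l hl => hN k hk l hl x rfl⟩
    obtain ⟨a, ha⟩ := cauchySeq_tendsto_of_complete hcs
    rwa [ha.limUnder_eq]
  have hlocunifd : TendstoLocallyUniformlyOn F'
      (fun x => limUnder atTop (fun l => F' l x)) atTop Ω := by
    rw [tendstoLocallyUniformlyOn_iff_forall_isCompact hΩ]
    intro K hKΩ hK
    exact (hUCd K hK hKΩ).tendstoUniformlyOn_of_tendsto
      (fun x hx => hptd x (hKΩ hx))
  have hφdiff : DifferentiableOn ℂ φ₀ Ω := by
    intro x hx
    exact ((hasFDerivAt_of_tendstoLocallyUniformlyOn hΩ hlocunifd hFd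
      (fun x hx => hptlim x hx) hx).differentiableAt).differentiableWithinAt
  have hφcont : ContinuousOn φ₀ Ω := hφdiff.continuousOn
  -- Fatou principle
  have hfatou : ∀ (c : EuclideanSpace ℂ (Fin n) → ℝ),
      AEMeasurable c (volume.restrict Ω) → ∀ (k : ℕ) (b : ℝ≥0∞),
      (∀ᶠ l in atTop, (∫⁻ x in Ω, ENNReal.ofReal (c x * ‖ψ k x - ψ l x‖ ^ 2)) ≤ b) →
      (∫⁻ x in Ω, ENNReal.ofReal (c x * ‖ψ k x - φ₀ x‖ ^ 2)) ≤ b := by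
    intro c hc k b hev
    refine fatou_bound (volume.restrict Ω)
      (fun l x => ENNReal.ofReal (c x * ‖ψ k x - ψ l x‖ ^ 2)) _
      (fun l => aemeas_ofReal_mul hΩm hc
        (((hQ k).1.continuousOn).sub ((hQ l).1.continuousOn))) ?_ hev
    filter_upwards [ae_restrict_mem hΩm] with x hx
    have t1 : Tendsto (fun l => ψ k x - ψ l x) atTop (nhds (ψ k x - φ₀ x)) :=
      tendsto_const_nhds.sub (hptlim x hx)
    have t2 : Tendsto (fun l => c x * ‖ψ k x - ψ l x‖ ^ 2) atTop
        (nhds (c x * ‖ψ k x - φ₀ x‖ ^ 2)) := ((t1.norm).pow 2).const_mul (c x)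
    exact (ENNReal.continuous_ofReal.tendsto _).comp t2
  have hcw : AEMeasurable w (volume.restrict Ω) := hw.aemeasurable hΩm
  have hcfw : AEMeasurable (fun x => max (f x) 0 * w x) (volume.restrict Ω) :=
    (hf.max measurable_const).aemeasurable.mul hcw
  -- quantitative L² and t⁺ bounds for ψ k - φ₀
  have hLk : ∀ (k N : ℕ) (η : ℝ), 0 < η →
      (∀ l ≥ N, tfNorm n Ω w f c₂ (fun x => ψ k x - ψ l x) < η) →
      l2NormSq n Ω w (fun x => ψ k x - φ₀ x) ≤ ENNReal.ofReal (η ^ 2) := by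
    intro k N η hη hN
    rw [l2_eq_c]
    apply hfatou w hcw k _
    rw [eventually_atTop]
    refine ⟨N, fun l hl => ?_⟩
    rw [← l2_eq_c (n := n)]
    refine le_trans (hL2Q _ (hdQ k l)) (ENNReal.ofReal_le_ofReal ?_)
    have h1 := hN l hl
    have h2 := htf0 (fun x => ψ k x - ψ l x)
    set t := tfNorm n Ω w f c₂ (fun x => ψ k x - ψ l x) with htdef
    nlinarith [mul_le_mul h1.le h1.le h2 hη.le]
  have hTk : ∀ (k N : ℕ) (η : ℝ), 0 < η →
      (∀ l ≥ N, tfNorm n Ω w f c₂ (fun x => ψ k x - ψ l x) < η) →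
      tForm n Ω w (fun x => max (f x) 0) (fun x => ψ k x - φ₀ x) ≤
        ENNReal.ofReal (η ^ 2 / (1 - c₁)) := by
    intro k N η hη hN
    rw [tForm_eq_c]
    apply hfatou _ hcfw k _
    rw [eventually_atTop]
    refine ⟨N, fun l hl => ?_⟩
    rw [← tForm_eq_c (n := n)]
    refine le_trans (hTpQ _ (hdQ k l)) (ENNReal.ofReal_le_ofReal ?_)
    have h1 := hN l hl
    have h2 := htf0 (fun x => ψ k x - ψ l x)
    set t := tfNorm n Ω w f c₂ (fun x => ψ k x - ψ l x) with htdef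
    have h1c : 0 < 1 - c₁ := by linarith
    rw [div_le_div_iff₀ h1c h1c]
    nlinarith [mul_le_mul h1.le h1.le h2 hη.le]
  have hkQ : ∀ (k N : ℕ) (η : ℝ), 0 < η →
      (∀ l ≥ N, tfNorm n Ω w f c₂ (fun x => ψ k x - ψ l x) < η) →
      MemQplus n Ω w f (fun x => ψ k x - φ₀ x) := by
    intro k N η hη hN
    exact ⟨(hQ k).1.sub hφdiff,
      lt_of_le_of_lt (hLk k N η hη hN) ENNReal.ofReal_lt_top,
      lt_of_le_of_lt (hTk k N η hη hN) ENNReal.ofReal_lt_top⟩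
  -- φ₀ ∈ Q
  obtain ⟨N₀, hN₀⟩ := hCauchy 1 one_pos
  have hdQ0 : MemQplus n Ω w f (fun x => ψ N₀ x - φ₀ x) :=
    hkQ N₀ N₀ 1 one_pos (fun l hl => hN₀ N₀ le_rfl l hl)
  have hφQ : MemQplus n Ω w f φ₀ := by
    have heq : (fun x => ψ N₀ x - (ψ N₀ x - φ₀ x)) = φ₀ :=
      funext fun x => sub_sub_cancel _ _
    refine ⟨hφdiff, ?_, ?_⟩
    · have h1 := l2_sub_le hΩm hw hw0 ((hQ N₀).1.continuousOn)
        (((hQ N₀).1.continuousOn).sub hφcont) (b := fun x => ψ N₀ x - φ₀ x)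
      rw [heq] at h1
      exact lt_of_le_of_lt h1 (ENNReal.add_lt_top.2
        ⟨ENNReal.mul_lt_top (by norm_num) (hQ N₀).2.1,
         ENNReal.mul_lt_top (by norm_num) hdQ0.2.1⟩)
    · have h1 := tForm_sub_le hΩm (fun x _ => le_max_right _ _)
        (hf.max measurable_const) hw hw0 ((hQ N₀).1.continuousOn)
        (((hQ N₀).1.continuousOn).sub hφcont) (b := fun x => ψ N₀ x - φ₀ x)
      rw [heq] at h1
      exact lt_of_le_of_lt h1 (ENNReal.add_lt_top.2
        ⟨ENNReal.mul_lt_top (by norm_num) (hQ N₀).2.2,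
         ENNReal.mul_lt_top (by norm_num) hdQ0.2.2⟩)
  refine ⟨φ₀, hφQ, ?_⟩
  -- convergence in the form norm
  rw [Metric.tendsto_atTop]
  intro ε hε
  set D : ℝ := 1 / (1 - c₁) + (c₂ + 1) with hD
  have h1c : 0 < 1 - c₁ := by linarith
  have hD0 : 0 < D := by
    rw [hD]; positivity
  set δ : ℝ := ε / (Real.sqrt D + 1) with hδ
  have hδ0 : 0 < δ := by
    rw [hδ]; positivity
  obtain ⟨N, hN⟩ := hCauchy δ hδ0
  refine ⟨N, fun k hk => ?_⟩
  have hNk : ∀ l ≥ N, tfNorm n Ω w f c₂ (fun x => ψ k x - ψ l x) < δ :=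
    fun l hl => hN k hk l hl
  have hkQ' := hkQ k N δ hδ0 hNk
  have hA' : (tForm n Ω w (fun x => max (f x) 0) (fun x => ψ k x - φ₀ x)).toReal ≤
      δ ^ 2 / (1 - c₁) := by
    have := ENNReal.toReal_mono ENNReal.ofReal_ne_top (hTk k N δ hδ0 hNk)
    rwa [ENNReal.toReal_ofReal (by positivity)] at this
  have hL' : (l2NormSq n Ω w (fun x => ψ k x - φ₀ x)).toReal ≤ δ ^ 2 := by
    have := ENNReal.toReal_mono ENNReal.ofReal_ne_top (hLk k N δ hδ0 hNk)
    rwa [ENNReal.toReal_ofReal (by positivity)] at this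
  have hB'0 : 0 ≤ (tForm n Ω w (fun x => max (-f x) 0) (fun x => ψ k x - φ₀ x)).toReal :=
    ENNReal.toReal_nonneg
  have harg : tfNorm n Ω w f c₂ (fun x => ψ k x - φ₀ x) ^ 2 ≤ δ ^ 2 * D := by
    rw [hsq _ hkQ', hD]
    have : δ ^ 2 * (1 / (1 - c₁) + (c₂ + 1)) = δ ^ 2 / (1 - c₁) + (c₂ + 1) * δ ^ 2 := by
      field_simp
    rw [this]
    have hL'' : (c₂ + 1) * (l2NormSq n Ω w (fun x => ψ k x - φ₀ x)).toReal ≤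
        (c₂ + 1) * δ ^ 2 := by nlinarith
    linarith
  have hfin : tfNorm n Ω w f c₂ (fun x => ψ k x - φ₀ x) < ε := by
    have h2 : tfNorm n Ω w f c₂ (fun x => ψ k x - φ₀ x) ^ 2 < ε ^ 2 := by
      refine lt_of_le_of_lt harg ?_
      have hsD := Real.sq_sqrt hD0.le
      have hsD0 := Real.sqrt_nonneg D
      rw [hδ]
      rw [div_pow]
      rw [div_mul_eq_mul_div, div_lt_iff₀ (by positivity)]
      nlinarith [sq_nonneg ε, sq_nonneg (Real.sqrt D)]
    nlinarith [htf0 (fun x => ψ k x - φ₀ x), sq_nonneg ε, hε]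
  rw [Real.dist_eq, sub_zero, abs_of_nonneg (htf0 _)]
  exact hfin


end
end

section
/- Let d ≥ 1 and let m, l be non-negative integers with l < m − d/2. Then there is a constant C = C(d, m, l) ≥ 0 such that for every multi-index j = (j_1,…,j_d) with |j| = j_1 + … + j_d ≤ l, every x ∈ ℝ^d, and every measurable g : ℝ^d → ℂ with ∫_{ℝ^d} |g(k)|² (1 + ‖k‖²)^m dk < ∞, the function k ↦ k^j e^{i⟨k,x⟩} g(k) (where k^j = k_1^{j_1}⋯k_d^{j_d}) is Lebesgue-integrable and | ∫_{ℝ^d} k^j e^{i⟨k,x⟩} g(k) dk / (2π)^d | ≤ C · ( ∫_{ℝ^d} |g(k)|² (1 + ‖k‖²)^m dk )^{1/2}. In particular, taking g to be the Fourier transform of f ∈ W^{m,2}(ℝ^d), the functionals δ^{(j)}_x are uniformly bounded on the Sobolev space W^{m,2}(ℝ^d) for |j| ≤ l. -/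
open MeasureTheory ENNReal RealInnerProductSpace

noncomputable section

lemma euclid_abs_apply_le_norm {d : ℕ} (k : EuclideanSpace ℝ (Fin d)) (i : Fin d) :
    |k i| ≤ ‖k‖ := by
  rw [EuclideanSpace.norm_eq]
  have h1 : |k i| = Real.sqrt (‖k i‖ ^ 2) := by
    rw [Real.sqrt_sq_eq_abs]; simp [abs_abs]
  rw [h1]
  apply Real.sqrt_le_sqrt
  exact Finset.single_le_sum (f := fun i => ‖k i‖ ^ 2) (fun i _ => by positivity)
    (Finset.mem_univ i)

lemma poly_bound {d l : ℕ} (j : Fin d → ℕ) (hj : (∑ i, j i) ≤ l)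
    (k : EuclideanSpace ℝ (Fin d)) :
    |∏ i, (k i) ^ (j i)| ≤ (1 + ‖k‖ ^ 2) ^ ((l : ℝ) / 2) := by
  have h0 : (0:ℝ) ≤ ‖k‖ := norm_nonneg _
  have hb : (1:ℝ) ≤ 1 + ‖k‖ ^ 2 := by nlinarith
  have h1 : |∏ i, (k i) ^ (j i)| ≤ ‖k‖ ^ (∑ i, j i) := by
    rw [Finset.abs_prod, ← Finset.prod_pow_eq_pow_sum]
    refine Finset.prod_le_prod (fun i _ => by positivity) (fun i _ => ?_)
    rw [abs_pow]
    exact pow_le_pow_left₀ (abs_nonneg _) (euclid_abs_apply_le_norm k i) _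
  refine h1.trans ?_
  set n := ∑ i, j i
  have h2 : ‖k‖ ^ n = (‖k‖ ^ 2 : ℝ) ^ ((n : ℝ) / 2) := by
    rw [← Real.rpow_natCast ‖k‖ n, ← Real.rpow_natCast ‖k‖ 2, ← Real.rpow_mul h0]
    congr 1
    ring
  rw [h2]
  calc (‖k‖ ^ 2) ^ ((n : ℝ) / 2) ≤ (1 + ‖k‖ ^ 2) ^ ((n : ℝ) / 2) := by
        apply Real.rpow_le_rpow (by positivity) (by linarith) (by positivity)
    _ ≤ (1 + ‖k‖ ^ 2) ^ ((l : ℝ) / 2) := by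
        apply Real.rpow_le_rpow_of_exponent_le hb
        have : (n : ℝ) ≤ l := Nat.cast_le.mpr hj
        linarith

/-- uniform boundedness of the derivative point-evaluation functionals
`δ^{(j)}_x(f) = ∫ k^j e^{i⟨k,x⟩} f̂(k) dk/(2π)^d` on the Sobolev space `W^{m,2}(ℝ^d)`
(expressed on the Fourier side), for multi-indices `j` of degree `|j| ≤ l < m − d/2`. -/
theorem sobolev_point_evaluation_bound (d m l : ℕ) (hd : 1 ≤ d)
    (hml : (l : ℝ) < (m : ℝ) - (d : ℝ) / 2) :
    ∃ C : ℝ, 0 ≤ C ∧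
      ∀ j : Fin d → ℕ, (∑ i, j i) ≤ l →
      ∀ x : EuclideanSpace ℝ (Fin d),
      ∀ g : EuclideanSpace ℝ (Fin d) → ℂ, Measurable g →
        (∫⁻ k, ENNReal.ofReal (‖g k‖ ^ 2 * (1 + ‖k‖ ^ 2) ^ m)) < ⊤ →
        Integrable (fun k : EuclideanSpace ℝ (Fin d) =>
          ((∏ i, (k i) ^ (j i) : ℝ) : ℂ) *
            Complex.exp (Complex.I * ((⟪k, x⟫ : ℝ) : ℂ)) * g k) ∧
        ‖(∫ k : EuclideanSpace ℝ (Fin d),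
            ((∏ i, (k i) ^ (j i) : ℝ) : ℂ) *
              Complex.exp (Complex.I * ((⟪k, x⟫ : ℝ) : ℂ)) * g k) /
            ((2 * Real.pi) ^ d : ℝ)‖ ≤
          C * Real.sqrt (∫⁻ k, ENNReal.ofReal (‖g k‖ ^ 2 * (1 + ‖k‖ ^ 2) ^ m)).toReal := by
  -- integrability of the weight
  have hdr : (Module.finrank ℝ (EuclideanSpace ℝ (Fin d)) : ℝ) < 2 * ((m:ℝ) - l) := by
    rw [finrank_euclideanSpace_fin]; linarith
  have hA : Integrable (fun k : EuclideanSpace ℝ (Fin d) =>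
      ((1:ℝ) + ‖k‖ ^ 2) ^ ((l:ℝ) - m)) := by
    have h := integrable_rpow_neg_one_add_norm_sq (E := EuclideanSpace ℝ (Fin d))
      (μ := volume) hdr
    have he : (l:ℝ) - m = -(2 * ((m:ℝ) - l)) / 2 := by ring
    rw [he]; exact h
  set A : ℝ≥0∞ := ∫⁻ k : EuclideanSpace ℝ (Fin d),
      ENNReal.ofReal (((1:ℝ) + ‖k‖ ^ 2) ^ ((l:ℝ) - m)) with hAdef
  have hAlt : A < ⊤ := hA.lintegral_lt_top
  refine ⟨Real.sqrt A.toReal, Real.sqrt_nonneg _, ?_⟩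
  intro j hj x g hg hB
  set B : ℝ≥0∞ := ∫⁻ k : EuclideanSpace ℝ (Fin d),
      ENNReal.ofReal (‖g k‖ ^ 2 * (1 + ‖k‖ ^ 2) ^ m) with hBdef
  set F : EuclideanSpace ℝ (Fin d) → ℂ := fun k =>
    ((∏ i, (k i) ^ (j i) : ℝ) : ℂ) *
      Complex.exp (Complex.I * ((⟪k, x⟫ : ℝ) : ℂ)) * g k with hFdef
  -- measurability
  have hcoord : ∀ i : Fin d, Measurable fun k : EuclideanSpace ℝ (Fin d) => k i := by
    intro i
    exact (EuclideanSpace.proj i).continuous.measurable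
  have hprod : Measurable fun k : EuclideanSpace ℝ (Fin d) => (∏ i, (k i) ^ (j i) : ℝ) :=
    Finset.measurable_prod _ (fun i _ => (hcoord i).pow_const _)
  have hinner : Measurable fun k : EuclideanSpace ℝ (Fin d) => (⟪k, x⟫ : ℝ) :=
    (continuous_id.inner continuous_const).measurable
  have hFmeas : Measurable F := by
    apply Measurable.mul _ hg
    apply Measurable.mul
    · exact Complex.measurable_ofReal.comp hprod
    · exact Complex.continuous_exp.measurable.comp
        ((measurable_const.mul (Complex.measurable_ofReal.comp hinner)))
  -- norm of F
  have hFnorm : ∀ k, ‖F k‖ = |∏ i, (k i) ^ (j i)| * ‖g k‖ := by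
    intro k
    rw [hFdef]
    simp only [norm_mul]
    rw [mul_comm Complex.I ((⟪k, x⟫ : ℝ) : ℂ), 
      Complex.norm_exp_ofReal_mul_I, mul_one, Complex.norm_real, Real.norm_eq_abs]
  -- the two Hölder factors
  set φ : EuclideanSpace ℝ (Fin d) → ℝ≥0∞ := fun k =>
    ENNReal.ofReal (((1:ℝ) + ‖k‖ ^ 2) ^ (((l:ℝ) - m) / 2)) with hφdef
  set ψ : EuclideanSpace ℝ (Fin d) → ℝ≥0∞ := fun k =>
    ENNReal.ofReal (((1:ℝ) + ‖k‖ ^ 2) ^ ((m:ℝ) / 2) * ‖g k‖) with hψdef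
  have hbase : ∀ k : EuclideanSpace ℝ (Fin d), (0:ℝ) < 1 + ‖k‖ ^ 2 := by
    intro k; positivity
  have key : ∀ k, ENNReal.ofReal ‖F k‖ ≤ φ k * ψ k := by
    intro k
    rw [hφdef, hψdef, ← ENNReal.ofReal_mul (by positivity)]
    apply ENNReal.ofReal_le_ofReal
    rw [hFnorm k]
    have h1 : |∏ i, (k i) ^ (j i)| ≤ ((1:ℝ) + ‖k‖ ^ 2) ^ ((l:ℝ) / 2) := poly_bound j hj k
    have h2 : ((1:ℝ) + ‖k‖ ^ 2) ^ (((l:ℝ) - m) / 2) * ((1:ℝ) + ‖k‖ ^ 2) ^ ((m:ℝ) / 2)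
        = ((1:ℝ) + ‖k‖ ^ 2) ^ ((l:ℝ) / 2) := by
      rw [← Real.rpow_add (hbase k)]
      congr 1; ring
    calc |∏ i, (k i) ^ (j i)| * ‖g k‖ ≤ ((1:ℝ) + ‖k‖ ^ 2) ^ ((l:ℝ) / 2) * ‖g k‖ :=
          mul_le_mul_of_nonneg_right h1 (norm_nonneg _)
      _ = ((1:ℝ) + ‖k‖ ^ 2) ^ (((l:ℝ) - m) / 2) * (((1:ℝ) + ‖k‖ ^ 2) ^ ((m:ℝ) / 2) * ‖g k‖) := by
          rw [← h2]; ring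
  have hwcont : ∀ c : ℝ, Continuous fun k : EuclideanSpace ℝ (Fin d) =>
      ((1:ℝ) + ‖k‖ ^ 2) ^ c := fun c =>
    Continuous.rpow_const (by continuity) (fun k => Or.inl (by positivity))
  have hφmeas : Measurable φ :=
    ENNReal.measurable_ofReal.comp (hwcont _).measurable
  have hψmeas : Measurable ψ :=
    ENNReal.measurable_ofReal.comp ((hwcont _).measurable.mul hg.norm)
  have hφ2 : (∫⁻ k, (φ k) ^ (2:ℝ)) = A := by
    refine lintegral_congr fun k => ?_
    show (ENNReal.ofReal (((1:ℝ) + ‖k‖ ^ 2) ^ (((l:ℝ) - m) / 2))) ^ (2:ℝ)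
        = ENNReal.ofReal (((1:ℝ) + ‖k‖ ^ 2) ^ ((l:ℝ) - m))
    rw [ENNReal.ofReal_rpow_of_nonneg (Real.rpow_nonneg (hbase k).le _) (by norm_num)]
    congr 1
    rw [← Real.rpow_mul (hbase k).le]
    congr 1; ring
  have hψ2 : (∫⁻ k, (ψ k) ^ (2:ℝ)) = B := by
    refine lintegral_congr fun k => ?_
    show (ENNReal.ofReal (((1:ℝ) + ‖k‖ ^ 2) ^ ((m:ℝ) / 2) * ‖g k‖)) ^ (2:ℝ)
        = ENNReal.ofReal (‖g k‖ ^ 2 * (1 + ‖k‖ ^ 2) ^ m)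
    rw [ENNReal.ofReal_rpow_of_nonneg (by positivity) (by norm_num)]
    congr 1
    rw [Real.rpow_two, mul_pow]
    rw [← Real.rpow_natCast (((1:ℝ) + ‖k‖ ^ 2) ^ ((m:ℝ) / 2)) 2, ← Real.rpow_mul (hbase k).le]
    have : (m:ℝ) / 2 * (2:ℕ) = (m:ℝ) := by push_cast; ring
    rw [this, Real.rpow_natCast]
    ring
  have h22 : Real.HolderConjugate 2 2 := by constructor <;> norm_num
  have hCS : (∫⁻ k, ENNReal.ofReal ‖F k‖) ≤ A ^ (1/2 : ℝ) * B ^ (1/2 : ℝ) := by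
    calc (∫⁻ k, ENNReal.ofReal ‖F k‖) ≤ ∫⁻ k, (φ * ψ) k := lintegral_mono key
      _ ≤ (∫⁻ k, φ k ^ (2:ℝ)) ^ (1/2:ℝ) * (∫⁻ k, ψ k ^ (2:ℝ)) ^ (1/2:ℝ) :=
          ENNReal.lintegral_mul_le_Lp_mul_Lq volume h22 hφmeas.aemeasurable hψmeas.aemeasurable
      _ = A ^ (1/2:ℝ) * B ^ (1/2:ℝ) := by rw [hφ2, hψ2]
  have hABlt : A ^ (1/2 : ℝ) * B ^ (1/2 : ℝ) < ⊤ :=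
    ENNReal.mul_lt_top (ENNReal.rpow_lt_top_of_nonneg (by norm_num) hAlt.ne)
      (ENNReal.rpow_lt_top_of_nonneg (by norm_num) hB.ne)
  have hFint : Integrable F := by
    refine ⟨hFmeas.aestronglyMeasurable, ?_⟩
    rw [HasFiniteIntegral]
    have heq : (∫⁻ k, ‖F k‖ₑ) = ∫⁻ k, ENNReal.ofReal ‖F k‖ := by
      simp_rw [ofReal_norm]
    rw [heq]
    exact lt_of_le_of_lt hCS hABlt
  refine ⟨hFint, ?_⟩
  -- final bound
  have hpi : (1:ℝ) ≤ (2 * Real.pi) ^ d := by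
    apply one_le_pow₀
    linarith [Real.pi_gt_three]
  have step1 : ‖(∫ k, F k) / (((2 * Real.pi) ^ d : ℝ) : ℂ)‖ ≤ ‖∫ k, F k‖ := by
    rw [norm_div]
    apply div_le_self (norm_nonneg _)
    rw [Complex.norm_real, Real.norm_eq_abs, abs_of_nonneg (by positivity)]
    exact hpi
  have step2 : ‖∫ k, F k‖ ≤ (∫⁻ k, ENNReal.ofReal ‖F k‖).toReal :=
    norm_integral_le_lintegral_norm F
  have step3 : (∫⁻ k, ENNReal.ofReal ‖F k‖).toReal ≤ (A ^ (1/2:ℝ) * B ^ (1/2:ℝ)).toReal :=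
    ENNReal.toReal_mono hABlt.ne hCS
  have step4 : (A ^ (1/2:ℝ) * B ^ (1/2:ℝ)).toReal = Real.sqrt A.toReal * Real.sqrt B.toReal := by
    rw [ENNReal.toReal_mul, ← ENNReal.toReal_rpow, ← ENNReal.toReal_rpow,
      Real.sqrt_eq_rpow, Real.sqrt_eq_rpow]
  calc ‖(∫ k, F k) / (((2 * Real.pi) ^ d : ℝ) : ℂ)‖ ≤ ‖∫ k, F k‖ := step1
    _ ≤ (∫⁻ k, ENNReal.ofReal ‖F k‖).toReal := step2
    _ ≤ (A ^ (1/2:ℝ) * B ^ (1/2:ℝ)).toReal := step3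
    _ = Real.sqrt A.toReal * Real.sqrt B.toReal := step4

end
end

section
/- Let d ≥ 1 and let m, l be non-negative integers with l < m − d/2. Let g : ℝ^d → ℂ be measurable with ∫_{ℝ^d} |g(k)|² (1 + ‖k‖²)^m dk < ∞. Then g is Lebesgue-integrable on ℝ^d, and the function f : ℝ^d → ℂ defined by f(x) := (2π)^{−d} ∫_{ℝ^d} e^{i⟨k,x⟩} g(k) dk is l-times continuously differentiable on ℝ^d (of class C^l). In particular, every element of the Sobolev space W^{m,2}(ℝ^d) with l < m − d/2 has an l-times continuously differentiable representative x ↦ (2π)^{−d} ∫ e^{i⟨k,x⟩} f̂(k) dk. -/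
open MeasureTheory ENNReal RealInnerProductSpace
open FourierTransform Real

noncomputable section

/-- Sobolev embedding, Fourier side: if
`∫ |g(k)|²(1+‖k‖²)^m dk < ∞` and `l < m − d/2`, then `g` is integrable and
`x ↦ (2π)^{−d} ∫ e^{i⟨k,x⟩} g(k) dk` is `l`-times continuously differentiable;
in particular every element of `W^{m,2}(ℝ^d)` has a `C^l` representative. -/
theorem sobolev_continuous_representative (d m l : ℕ) (hd : 1 ≤ d)
    (hml : (l : ℝ) < (m : ℝ) - (d : ℝ) / 2)
    (g : EuclideanSpace ℝ (Fin d) → ℂ) (hg : Measurable g)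
    (hfin : (∫⁻ k, ENNReal.ofReal (‖g k‖ ^ 2 * (1 + ‖k‖ ^ 2) ^ m)) < ⊤) :
    Integrable g ∧
    ContDiff ℝ (l : ℕ∞) (fun x : EuclideanSpace ℝ (Fin d) =>
      (((2 * Real.pi) ^ d : ℝ))⁻¹ •
        ∫ k : EuclideanSpace ℝ (Fin d),
          Complex.exp (Complex.I * ((⟪k, x⟫ : ℝ) : ℂ)) * g k) := by
  have hG : Integrable (fun k : EuclideanSpace ℝ (Fin d) => ‖g k‖ ^ 2 * (1 + ‖k‖ ^ 2) ^ m) := by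
    refine ⟨((hg.norm.pow_const 2).mul (by fun_prop)).aestronglyMeasurable, ?_⟩
    rw [hasFiniteIntegral_iff_ofReal (ae_of_all _ fun k => by positivity)]
    exact hfin
  have hInt : ∀ n : ℕ, n ≤ l →
      Integrable (fun k : EuclideanSpace ℝ (Fin d) => ‖k‖ ^ n * ‖g k‖) := by
    intro n hn
    have hnm : (n : ℝ) < (m : ℝ) - (d : ℝ) / 2 :=
      lt_of_le_of_lt (by exact_mod_cast hn) hml
    have hpoly : Integrable (fun k : EuclideanSpace ℝ (Fin d) =>
        ((1 : ℝ) + ‖k‖ ^ 2) ^ ((n : ℝ) - (m : ℝ))) := by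
      have heq : (n : ℝ) - (m : ℝ) = -(2 * ((m : ℝ) - n)) / 2 := by ring
      rw [heq]
      apply integrable_rpow_neg_one_add_norm_sq
      simp only [finrank_euclideanSpace_fin]
      have hd2 : (0:ℝ) ≤ (d:ℝ)/2 := by positivity
      linarith
    refine (hpoly.add hG).div_const 2 |>.mono'
      ((measurable_norm.pow_const n).mul hg.norm).aestronglyMeasurable
      (ae_of_all _ fun k => ?_)
    set t : ℝ := 1 + ‖k‖ ^ 2 with ht
    have ht0 : (0:ℝ) < t := by positivity
    have hk2t : ‖k‖ ^ 2 ≤ t := by simp [ht]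
    have hsq : ∀ x : ℝ, (t ^ x) ^ 2 = t ^ (2 * x) := fun x => by
      rw [sq, ← Real.rpow_add ht0]; congr 1; ring
    have habn : ‖k‖ ^ n * ‖g k‖ =
        (‖k‖ ^ n * t ^ (-((m:ℝ)/2))) * (‖g k‖ * t ^ ((m:ℝ)/2)) := by
      rw [mul_mul_mul_comm, ← Real.rpow_add ht0]
      simp
    have ha2 : (‖k‖ ^ n * t ^ (-((m:ℝ)/2))) ^ 2 ≤ t ^ ((n:ℝ) - m) := by
      have h1 : (‖k‖ ^ n) ^ 2 ≤ t ^ (n:ℝ) := by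
        rw [Real.rpow_natCast]
        calc (‖k‖ ^ n) ^ 2 = (‖k‖ ^ 2) ^ n := by ring
          _ ≤ t ^ n := pow_le_pow_left₀ (by positivity) hk2t n
      calc (‖k‖ ^ n * t ^ (-((m:ℝ)/2))) ^ 2
          = (‖k‖ ^ n) ^ 2 * t ^ (-(m:ℝ)) := by
            have h2 : (2:ℝ) * -((m:ℝ)/2) = -(m:ℝ) := by ring
            rw [mul_pow, hsq, h2]
        _ ≤ t ^ (n:ℝ) * t ^ (-(m:ℝ)) := by gcongr
        _ = t ^ ((n:ℝ) - m) := by rw [← Real.rpow_add ht0, ← sub_eq_add_neg]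
    have hb2 : (‖g k‖ * t ^ ((m:ℝ)/2)) ^ 2 = ‖g k‖ ^ 2 * t ^ m := by
      have h2 : (2:ℝ) * ((m:ℝ)/2) = (m:ℝ) := by ring
      rw [mul_pow, hsq, h2, Real.rpow_natCast]
    have hamgm : ∀ a b : ℝ, a * b ≤ (a ^ 2 + b ^ 2) / 2 := fun a b => by
      nlinarith [sq_nonneg (a - b)]
    calc ‖‖k‖ ^ n * ‖g k‖‖ = ‖k‖ ^ n * ‖g k‖ := by
          rw [Real.norm_eq_abs, abs_of_nonneg (by positivity)]
      _ = (‖k‖ ^ n * t ^ (-((m:ℝ)/2))) * (‖g k‖ * t ^ ((m:ℝ)/2)) := habn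
      _ ≤ ((‖k‖ ^ n * t ^ (-((m:ℝ)/2))) ^ 2 + (‖g k‖ * t ^ ((m:ℝ)/2)) ^ 2) / 2 := hamgm _ _
      _ ≤ (t ^ ((n:ℝ) - m) + ‖g k‖ ^ 2 * t ^ m) / 2 := by
          rw [hb2]; gcongr
  have hgInt : Integrable g := by
    have := hInt 0 (Nat.zero_le l)
    simp only [pow_zero, one_mul] at this
    exact (integrable_norm_iff hg.aestronglyMeasurable).mp this
  refine ⟨hgInt, ?_⟩
  have hcd : ContDiff ℝ (l : ℕ∞) (𝓕 g) := by
    apply Real.contDiff_fourier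
    intro n hn
    exact hInt n (by exact_mod_cast hn)
  have key : ∀ x : EuclideanSpace ℝ (Fin d),
      (∫ k : EuclideanSpace ℝ (Fin d), Complex.exp (Complex.I * ((⟪k, x⟫ : ℝ) : ℂ)) * g k)
      = 𝓕 g ((-(2 * Real.pi)⁻¹ : ℝ) • x) := by
    intro x
    rw [Real.fourier_eq']
    refine integral_congr_ae (ae_of_all _ fun v => ?_)
    have hinner : ⟪v, ((-(2 * Real.pi)⁻¹ : ℝ) • x)⟫ = -(2 * Real.pi)⁻¹ * ⟪v, x⟫ :=
      real_inner_smul_right v x _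
    simp only [hinner, smul_eq_mul]
    have harg : -2 * Real.pi * (-(2 * Real.pi)⁻¹ * ⟪v, x⟫) = ⟪v, x⟫ := by
      field_simp
    rw [harg, mul_comm Complex.I]
  simp only [key]
  exact (hcd.comp (contDiff_const_smul _)).const_smul _


end
end
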